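/- Let F be a field of characteristic ≠ 2 and let a, b ∈ F^×. If the quaternion algebra H_{a,b} over F is split, i.e. isomorphic as an F-algebra to the algebra of 2×2 matrices over F, then S_{a,b}(F) = F; that is, for every t ∈ F there exist x₁, x₂, x₃, x₄ ∈ F with t = 2x₁ and x₁² − a·x₂² − b·x₃² + a·b·x₄² = 1. -/

import Mathlib

/-- **Lemma.** Let `F` be a field of characteristic `≠ 2` and `a, b ∈ F^×`. If the quaternion
algebra `H_{a,b}` over `F` is split, i.e. `F`-algebra isomorphic to the `2×2` matrix algebra over
`F`, then `S_{a,b}(F) = F`: every `t ∈ F` is the reduced trace `2x₁` of a norm-one element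
`x₁ + x₂α + x₃β + x₄αβ` of `H_{a,b}`. -/
theorem traces_of_norm_one_eq_field_of_split (F : Type*) [Field F] (hchar : ringChar F ≠ 2)
    (a b : F) (ha : a ≠ 0) (hb : b ≠ 0)
    (hsplit : Nonempty (QuaternionAlgebra F a 0 b ≃ₐ[F] Matrix (Fin 2) (Fin 2) F))
    (t : F) :
    ∃ x₁ x₂ x₃ x₄ : F,
      t = 2 * x₁ ∧ x₁ ^ 2 - a * x₂ ^ 2 - b * x₃ ^ 2 + a * b * x₄ ^ 2 = 1 := by
  obtain ⟨φ⟩ := hsplit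
  set M : Matrix (Fin 2) (Fin 2) F := !![0, -1; 1, t] with hM
  set q : QuaternionAlgebra F a 0 b := φ.symm M with hq
  set N : F := q.re ^ 2 - a * q.imI ^ 2 - b * q.imJ ^ 2 + a * b * q.imK ^ 2 with hN
  have key : q * q + N • (1 : QuaternionAlgebra F a 0 b) = (2 * q.re) • q := by
    ext <;>
      simp only [QuaternionAlgebra.re_add, QuaternionAlgebra.imI_add, QuaternionAlgebra.imJ_add,
        QuaternionAlgebra.imK_add, QuaternionAlgebra.re_mul, QuaternionAlgebra.imI_mul,
        QuaternionAlgebra.imJ_mul, QuaternionAlgebra.imK_mul, QuaternionAlgebra.re_smul,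
        QuaternionAlgebra.imI_smul, QuaternionAlgebra.imJ_smul, QuaternionAlgebra.imK_smul,
        QuaternionAlgebra.re_one, QuaternionAlgebra.imI_one, QuaternionAlgebra.imJ_one,
        QuaternionAlgebra.imK_one, smul_eq_mul, hN] <;> ring
  have keyM : M * M + N • (1 : Matrix (Fin 2) (Fin 2) F) = (2 * q.re) • M := by
    have := congrArg φ key
    simpa only [map_add, map_mul, map_smul, map_one, hq, AlgEquiv.apply_symm_apply] using this
  have h01 := congrFun (congrFun keyM 0) 1
  have h00 := congrFun (congrFun keyM 0) 0
  simp [hM, Matrix.add_apply, Matrix.smul_apply, Matrix.one_apply, Matrix.mul_apply,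
    Fin.sum_univ_two, smul_eq_mul] at h01 h00
  -- h01 : relation giving 2 * q.re = t ; h00 : giving N = 1
  refine ⟨q.re, q.imI, q.imJ, q.imK, ?_, ?_⟩
  · exact h01
  · rw [← hN]; linear_combination h00
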